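/- arXiv:2108.06381 — 6 statements merged into one kernel-verified Lean document; each statement's English description precedes it below -/
import Mathlib

section
/- If the districts have equal population, then m/n = (α + β̄ − 1)/(ᾱ + β̄ − 1); moreover the denominator ᾱ + β̄ − 1 is strictly positive. -/
open Finset

/-- With equal-population districts,
`m/n = (α + β̄ − 1)/(ᾱ + β̄ − 1)`, and the denominator `ᾱ + β̄ − 1` is
strictly positive. -/
theorem districting_seat_share
    (n : ℕ) (hn : 0 < n) (a : Fin n → ℝ)
    (ha : ∀ i, a i ∈ Set.Icc (0:ℝ) 1) (hne : ∀ i, a i ≠ 1/2)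
    (m : ℕ) (hm : m = (univ.filter (fun i => 1/2 < a i)).card)
    (hm0 : 0 < m) (hmn : m < n)
    (α β abar bbar : ℝ)
    (hα : α = (∑ i, a i) / n) (hβ : β = 1 - α)
    (habar : abar = (∑ i ∈ univ.filter (fun i => 1/2 < a i), a i) / m)
    (hbbar : bbar = (∑ i ∈ univ.filter (fun i => 1/2 < 1 - a i), (1 - a i)) / ((n:ℝ) - m)) :
    (m:ℝ)/n = (α + bbar - 1)/(abar + bbar - 1) ∧ 0 < abar + bbar - 1 := by
  set S := univ.filter (fun i : Fin n => 1/2 < a i) with hS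
  have hTeq : univ.filter (fun i : Fin n => 1/2 < 1 - a i)
      = univ.filter (fun i : Fin n => ¬ 1/2 < a i) := by
    apply Finset.filter_congr
    intro i _
    constructor
    · intro h hlt; linarith
    · intro h
      have : a i < 1/2 := lt_of_le_of_ne (not_lt.mp h) (hne i)
      linarith
  set T := univ.filter (fun i : Fin n => ¬ 1/2 < a i) with hT
  have hcardST : S.card + T.card = n := by
    rw [hS, hT, Finset.card_filter_add_card_filter_not, Finset.card_univ,
      Fintype.card_fin]
  have hcardT : (T.card : ℝ) = (n : ℝ) - m := by
    have : T.card = n - m := by omega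
    rw [this, Nat.cast_sub hmn.le]
  have hmR : (0:ℝ) < m := by exact_mod_cast hm0
  have hnmR : (0:ℝ) < (n:ℝ) - m := by
    have : (m:ℝ) < n := by exact_mod_cast hmn
    linarith
  have hnR : (0:ℝ) < n := by exact_mod_cast hn
  -- sums
  have h1 : ∑ i ∈ S, a i = m * abar := by
    rw [habar]; field_simp
  have h2 : ∑ i ∈ T, (1 - a i) = ((n:ℝ) - m) * bbar := by
    rw [hbbar, hTeq]; field_simp
  have h3 : ∑ i ∈ T, (1 - a i) = (T.card : ℝ) - ∑ i ∈ T, a i := by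
    rw [Finset.sum_sub_distrib, Finset.sum_const, nsmul_eq_mul, mul_one]
  have h4 : ∑ i, a i = ∑ i ∈ S, a i + ∑ i ∈ T, a i := by
    rw [hS, hT]
    exact (Finset.sum_filter_add_sum_filter_not _ _ _).symm
  have hαn : (n:ℝ) * α = ∑ i, a i := by
    rw [hα]; field_simp
  have hkey : (n:ℝ) * (α + bbar - 1) = m * (abar + bbar - 1) := by
    have := hcardT
    nlinarith [h1, h2, h3, h4, hαn]
  -- positivity
  have hSne : S.Nonempty := Finset.card_pos.mp (by omega)
  have hTne : T.Nonempty := Finset.card_pos.mp (by omega)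
  have habar_gt : 1/2 < abar := by
    have hsum : (S.card : ℝ) * (1/2) < ∑ i ∈ S, a i := by
      have := Finset.sum_lt_sum_of_nonempty hSne (f := fun _ => (1/2:ℝ)) (g := a)
        (fun i hi => (Finset.mem_filter.mp hi).2)
      simpa [Finset.sum_const, nsmul_eq_mul] using this
    rw [← hm] at hsum
    rw [habar]
    rw [lt_div_iff₀ hmR]
    linarith
  have hbbar_gt : 1/2 < bbar := by
    have hsum : (T.card : ℝ) * (1/2) < ∑ i ∈ T, (1 - a i) := by
      have := Finset.sum_lt_sum_of_nonempty hTne (f := fun _ => (1/2:ℝ)) (g := fun i => 1 - a i)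
        (fun i hi => by
          have h := (Finset.mem_filter.mp hi).2
          have : a i < 1/2 := lt_of_le_of_ne (not_lt.mp h) (hne i)
          linarith)
      simpa [Finset.sum_const, nsmul_eq_mul] using this
    rw [hcardT] at hsum
    rw [hbbar, hTeq]
    rw [lt_div_iff₀ hnmR]
    linarith
  have hden : 0 < abar + bbar - 1 := by linarith
  refine ⟨?_, hden⟩
  rw [div_eq_div_iff hnR.ne' hden.ne']
  nlinarith [hkey]
end

section
/- If the districts have equal population, then 1/2 + (n/m)·(α − 1/2) < ᾱ and ᾱ ≤ min{1, (n/m)·α}. -/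
open Finset

/-- With equal-population districts,
`1/2 + (n/m)(α − 1/2) < ᾱ ≤ min{1, (n/m)·α}`. -/
theorem districting_abar_bounds
    (n : ℕ) (hn : 0 < n) (a : Fin n → ℝ)
    (ha : ∀ i, a i ∈ Set.Icc (0:ℝ) 1) (hne : ∀ i, a i ≠ 1/2)
    (m : ℕ) (hm : m = (univ.filter (fun i => 1/2 < a i)).card)
    (hm0 : 0 < m) (hmn : m < n)
    (α β abar bbar : ℝ)
    (hα : α = (∑ i, a i) / n) (hβ : β = 1 - α)
    (habar : abar = (∑ i ∈ univ.filter (fun i => 1/2 < a i), a i) / m)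
    (hbbar : bbar = (∑ i ∈ univ.filter (fun i => 1/2 < 1 - a i), (1 - a i)) / ((n:ℝ) - m)) :
    1/2 + (n:ℝ)/m * (α - 1/2) < abar ∧ abar ≤ min 1 ((n:ℝ)/m * α) := by
  set S : Finset (Fin n) := univ.filter (fun i => 1/2 < a i) with hS
  have hmR : (0:ℝ) < m := by exact_mod_cast hm0
  have hnR : (0:ℝ) < n := by exact_mod_cast hn
  have hsplit : (∑ i, a i) = (∑ i ∈ S, a i) + ∑ i ∈ Sᶜ, a i := by
    rw [add_comm, Finset.sum_compl_add_sum]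
  have hcard : (Sᶜ).card = n - m := by
    rw [Finset.card_compl, ← hm]; simp
  have hne' : (Sᶜ).Nonempty := by
    rw [← Finset.card_pos, hcard]; omega
  have hcompl_lt : ∑ i ∈ Sᶜ, a i < ((n:ℝ) - m) * (1/2) := by
    have : ∑ i ∈ Sᶜ, a i < ∑ i ∈ Sᶜ, (1/2 : ℝ) := by
      apply Finset.sum_lt_sum_of_nonempty hne'
      intro i hi
      simp only [hS, Finset.mem_compl, Finset.mem_filter, Finset.mem_univ, true_and,
        not_lt] at hi
      exact lt_of_le_of_ne hi (hne i)
    calc ∑ i ∈ Sᶜ, a i < ∑ i ∈ Sᶜ, (1/2 : ℝ) := this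
      _ = ((Sᶜ).card : ℝ) * (1/2) := by rw [Finset.sum_const, nsmul_eq_mul]
      _ = ((n:ℝ) - m) * (1/2) := by
          rw [hcard]; congr 1; push_cast [Nat.cast_sub hmn.le]; ring
  have hna : (n:ℝ) * α = ∑ i, a i := by
    rw [hα]; field_simp
  have habar' : (m:ℝ) * abar = ∑ i ∈ S, a i := by
    rw [habar]; field_simp
  constructor
  · have key : 1/2*(m:ℝ) + n*(α-1/2) < abar*m := by nlinarith
    have h2 : (1/2 + (n:ℝ)/m*(α-1/2))*m = 1/2*m + n*(α-1/2) := by field_simp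
    refine lt_of_mul_lt_mul_right ?_ hmR.le
    rw [h2]; exact key
  · rw [le_min_iff]
    constructor
    · rw [habar, div_le_one hmR]
      calc ∑ i ∈ S, a i ≤ ∑ i ∈ S, (1:ℝ) := by
            exact Finset.sum_le_sum fun i _ => (ha i).2
        _ = (S.card : ℝ) := by simp
        _ = (m:ℝ) := by rw [hm]
    · rw [habar, div_le_iff₀ hmR]
      have h2 : ∑ i ∈ S, a i ≤ ∑ i, a i := by
        apply Finset.sum_le_sum_of_subset_of_nonneg (Finset.subset_univ S)
        intro i _ _; exact (ha i).1
      have h3 : (n:ℝ)/m*α*m = n*α := by field_simp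
      rw [h3]; linarith
end

section
/- Let n be a positive integer and β ∈ (0, 1/2) a real number. Define K = 2nβ − 1 if 2nβ is an integer, and K = ⌊2nβ⌋ otherwise. Then there exist real numbers α_1, …, α_n ∈ [0,1] with (1/n)·∑_{i=1}^n (1 − α_i) = β such that the number of indices i with 1 − α_i > 1/2 is at least K. That is, with equal-population districts, a minority party holding a fraction β of the overall vote can be allotted at least K majority-B districts. -/
open Finset

/-- With `n` equal-population districts and minority vote
fraction `β ∈ (0, 1/2)`, letting `K = 2nβ − 1` if `2nβ` is an integer and
`K = ⌊2nβ⌋` otherwise, there is a districting plan in which at least `K`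
districts are majority-B. -/
theorem gerrymander_minority_seats
    (n : ℕ) (hn : 0 < n) (β : ℝ) (hβ0 : 0 < β) (hβ : β < 1/2)
    (K : ℤ)
    (hK1 : (∃ k : ℤ, 2*(n:ℝ)*β = (k:ℝ)) → (K:ℝ) = 2*(n:ℝ)*β - 1)
    (hK2 : (¬ ∃ k : ℤ, 2*(n:ℝ)*β = (k:ℝ)) → K = ⌊2*(n:ℝ)*β⌋) :
    ∃ a : Fin n → ℝ, (∀ i, a i ∈ Set.Icc (0:ℝ) 1) ∧
      (1/(n:ℝ)) * ∑ i, (1 - a i) = β ∧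
      K ≤ (((univ.filter (fun i => 1/2 < 1 - a i)).card : ℤ)) := by
  have hn' : (0:ℝ) < n := by exact_mod_cast hn
  have hKlt : (K:ℝ) < 2*(n:ℝ)*β := by
    by_cases h : ∃ k : ℤ, 2*(n:ℝ)*β = (k:ℝ)
    · rw [hK1 h]; linarith
    · rw [hK2 h]
      rcases lt_or_eq_of_le (Int.floor_le (2*(n:ℝ)*β)) with h1 | h1
      · exact h1
      · exact absurd ⟨⌊2*(n:ℝ)*β⌋, h1.symm⟩ h
  have h2nβ : (0:ℝ) < 2*(n:ℝ)*β := by positivity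
  have hK0 : 0 ≤ K := by
    by_cases h : ∃ k : ℤ, 2*(n:ℝ)*β = (k:ℝ)
    · obtain ⟨k, hk⟩ := h
      have hk1 : 1 ≤ k := by
        have : (0:ℝ) < (k:ℝ) := hk ▸ h2nβ
        exact_mod_cast this
      have : (K:ℝ) = (k:ℝ) - 1 := by rw [hK1 ⟨k, hk⟩, hk]
      have : K = k - 1 := by exact_mod_cast this
      omega
    · rw [hK2 h]; exact Int.floor_nonneg.mpr h2nβ.le
  have hKn : K < (n:ℤ) := by
    have : (K:ℝ) < (n:ℝ) := by nlinarith
    exact_mod_cast this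
  set m := K.toNat with hmdef
  have hmK : (m:ℤ) = K := Int.toNat_of_nonneg hK0
  have hmn : m < n := by omega
  have hmR : ((m:ℝ)) = (K:ℝ) := by exact_mod_cast hmK
  have hmlt : (m:ℝ) < 2*(n:ℝ)*β := hmR ▸ hKlt
  have hnm : (0:ℝ) < (n:ℝ) - m := by
    have : (m:ℝ) < n := by exact_mod_cast hmn
    linarith
  set c : ℝ := min 1 ((n*β)/m) with hc
  set r : ℝ := ((n:ℝ)*β - m*c)/((n:ℝ) - m) with hr
  have hc1 : c ≤ 1 := min_le_left _ _
  have hc0 : 0 ≤ c := le_min one_pos.le (by positivity)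
  have hmc : (m:ℝ) * c ≤ (n:ℝ)*β := by
    rcases Nat.eq_zero_or_pos m with h0 | h0
    · simp [h0]; positivity
    · have hm' : (0:ℝ) < m := by exact_mod_cast h0
      calc (m:ℝ) * c ≤ m * ((n*β)/m) := by
            exact mul_le_mul_of_nonneg_left (min_le_right _ _) hm'.le
        _ = n*β := by field_simp
  have hr0 : 0 ≤ r := by
    apply div_nonneg _ hnm.le
    linarith
  have hr1 : r ≤ 1 := by
    rw [div_le_one hnm]
    have hβ1 : (n:ℝ)*β ≤ n := by nlinarith
    rcases min_cases 1 ((n*β)/m) with ⟨h1, _⟩ | ⟨h1, h2⟩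
    · rw [hc, h1]; linarith
    · rcases Nat.eq_zero_or_pos m with h0 | h0
      · simp [h0]; linarith
      · have hm' : (0:ℝ) < m := by exact_mod_cast h0
        rw [hc, h1]
        have : (m:ℝ) * (n*β/m) = n*β := by field_simp
        rw [this]; linarith
  refine ⟨fun i => if (i:ℕ) < m then 1 - c else 1 - r, ?_, ?_, ?_⟩
  · intro i
    constructor <;> (dsimp only; split_ifs) <;> linarith
  · have hsum : ∑ i : Fin n, (1 - (if (i:ℕ) < m then 1 - c else 1 - r))
        = (m:ℝ)*c + ((n:ℝ)-m)*r := by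
      have : ∀ i : Fin n, (1 - (if (i:ℕ) < m then 1 - c else 1 - r))
          = (if (i:ℕ) < m then c else r) := by
        intro i; split_ifs <;> ring
      rw [Finset.sum_congr rfl (fun i _ => this i)]
      rw [Fin.sum_univ_eq_sum_range (fun i => if i < m then c else r)]
      rw [Finset.range_eq_Ico, ← Finset.sum_Ico_consecutive _ (Nat.zero_le m) hmn.le]
      rw [Finset.sum_congr rfl (fun i hi => if_pos (Finset.mem_Ico.mp hi).2),
        Finset.sum_congr rfl (g := fun _ => r)
          (fun i hi => if_neg (by have := (Finset.mem_Ico.mp hi).1; omega))]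
      simp only [Finset.sum_const, Nat.card_Ico, nsmul_eq_mul, Nat.sub_zero]
      push_cast [Nat.cast_sub hmn.le]
      ring
    rw [hsum]
    have : ((n:ℝ)-m)*r = n*β - m*c := by
      rw [hr]; field_simp
    rw [this]
    field_simp
    ring
  · rw [← hmK]
    have hsub : (univ.filter (fun i : Fin n => (i:ℕ) < m)) ⊆
        (univ.filter (fun i : Fin n => 1/2 < 1 - (if (i:ℕ) < m then 1 - c else 1 - r))) := by
      intro i hi
      rw [Finset.mem_filter] at hi ⊢
      refine ⟨hi.1, ?_⟩
      rw [if_pos hi.2]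
      have hm1 : 1 ≤ m := Nat.pos_of_ne_zero (by
        intro h0
        exact absurd hi.2 (by omega))
      have hm' : (1:ℝ) ≤ m := by exact_mod_cast hm1
      have hchalf : 1/2 < c := by
        apply lt_min (by norm_num)
        rw [lt_div_iff₀ (by linarith)]
        nlinarith
      linarith
    have hcard : (univ.filter (fun i : Fin n => (i:ℕ) < m)).card = m := by
      have : (univ.filter (fun i : Fin n => (i:ℕ) < m)) = Finset.Iio (⟨m, hmn⟩ : Fin n) := by
        ext i
        simp [Finset.mem_Iio, Fin.lt_def]
      rw [this, Fin.card_Iio]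
    have := Finset.card_le_card hsub
    rw [hcard] at this
    exact_mod_cast this
end

section
/- Suppose the districts have equal population, every district has margin δ > 0, β > 0, and Δ = α − β = 1 − 2β is the voting margin in the population as a whole. Then the proportionality ratio ρ = (1 − m/n)/β satisfies ρ = (1 − Δ/δ)/(1 − Δ). -/
open Finset

/-- With equal-population districts each having margin
`δ > 0`, overall minority fraction `β > 0` and overall margin `Δ = α − β`,
the proportionality ratio `ρ = (1 − m/n)/β` satisfies
`ρ = (1 − Δ/δ)/(1 − Δ)`. -/
theorem proportionality_ratio_uniform_margin
    (n : ℕ) (hn : 0 < n) (a : Fin n → ℝ)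
    (ha : ∀ i, a i ∈ Set.Icc (0:ℝ) 1)
    (δ : ℝ) (hδ : 0 < δ)
    (hmarg : ∀ i, a i - (1 - a i) = δ ∨ (1 - a i) - a i = δ)
    (m : ℕ) (hm : m = (univ.filter (fun i => 1/2 < a i)).card)
    (α β : ℝ) (hα : α = (∑ i, a i) / n) (hβ : β = 1 - α)
    (hβ0 : 0 < β)
    (Δ ρ : ℝ) (hΔ : Δ = α - β) (hρ : ρ = (1 - (m:ℝ)/n)/β) :
    ρ = (1 - Δ/δ)/(1 - Δ) := by
  set S : Finset (Fin n) := univ.filter (fun i => 1/2 < a i) with hS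
  have hval : ∀ i, a i = (1 + δ)/2 ∨ a i = (1 - δ)/2 := by
    intro i
    rcases hmarg i with h | h
    · left; linarith
    · right; linarith
  have hin : ∀ i ∈ S, a i = (1 + δ)/2 := by
    intro i hi
    rcases hval i with h | h
    · exact h
    · simp only [hS, mem_filter] at hi
      linarith [hi.2]
  have hout : ∀ i ∈ univ \ S, a i = (1 - δ)/2 := by
    intro i hi
    rcases hval i with h | h
    · simp only [hS, mem_sdiff, mem_filter, mem_univ, true_and, not_lt] at hi
      linarith
    · exact h
  have hsum : (∑ i, a i) = (m:ℝ) * ((1 + δ)/2) + ((n:ℝ) - m) * ((1 - δ)/2) := by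
    have h1 : (∑ i, a i) = ∑ i ∈ S, a i + ∑ i ∈ univ \ S, a i := by
      rw [add_comm, Finset.sum_sdiff (Finset.subset_univ S)]
    rw [h1, Finset.sum_congr rfl hin, Finset.sum_congr rfl hout,
      Finset.sum_const, Finset.sum_const]
    have hcard : (univ \ S).card = n - m := by
      rw [Finset.card_sdiff_of_subset (Finset.subset_univ S), Finset.card_univ, hm]
      simp [hS]
    have hmn : m ≤ n := by
      rw [hm]
      exact (Finset.card_filter_le _ _).trans (by simp)
    rw [hcard, ← hm]
    simp only [nsmul_eq_mul]
    rw [Nat.cast_sub hmn]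
    try ring
  have hn' : (n:ℝ) ≠ 0 := Nat.cast_ne_zero.mpr hn.ne'
  have hαval : α = 1/2 + (2*(m:ℝ)/n - 1) * δ / 2 := by
    rw [hα, hsum]; field_simp; ring
  have hΔval : Δ = (2*(m:ℝ)/n - 1) * δ := by
    rw [hΔ, hβ, hαval]; ring
  have hβval : β = (1 - (2*(m:ℝ)/n - 1) * δ) / 2 := by
    rw [hβ, hαval]; ring
  have h1Δ : 1 - Δ = 2 * β := by rw [hΔval, hβval]; ring
  have h2 : 1 - Δ/δ = 2*(1-(m:ℝ)/n) := by
    rw [hΔval, mul_div_assoc, div_self hδ.ne', mul_one]; ring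
  rw [hρ, h2, h1Δ, mul_div_mul_left _ _ (two_ne_zero)]
end

section
/- Suppose the districts have equal population, every district has margin δ > 0, 1/4 < β < 1/2, and the number m of majority-A districts satisfies 1 − m/n = 2β − 1/2 (the value that minimizes the efficiency gap). Then δ = 1/2, the efficiency gap |(1 − m/n) − (2β − 1/2)| equals 0, and the proportionality ratio ρ = (1 − m/n)/β equals 2 − 1/(2β). -/
open Finset

/-- With equal-population districts each having margin
`δ > 0`, `1/4 < β < 1/2`, and `1 − m/n = 2β − 1/2` (the efficiency-gap
minimizing seat allocation), one has `δ = 1/2`, a zero efficiency gap, and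
proportionality ratio `ρ = 2 − 1/(2β)`. -/
theorem min_efficiency_gap_consequences_large_beta
    (n : ℕ) (hn : 0 < n) (a : Fin n → ℝ)
    (ha : ∀ i, a i ∈ Set.Icc (0:ℝ) 1)
    (δ : ℝ) (hδ : 0 < δ)
    (hmarg : ∀ i, a i - (1 - a i) = δ ∨ (1 - a i) - a i = δ)
    (m : ℕ) (hm : m = (univ.filter (fun i => 1/2 < a i)).card)
    (α β : ℝ) (hα : α = (∑ i, a i) / n) (hβ : β = 1 - α)
    (hβ1 : 1/4 < β) (hβ2 : β < 1/2)
    (hgap : 1 - (m:ℝ)/n = 2*β - 1/2) :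
    δ = 1/2 ∧
    |(1 - (m:ℝ)/n) - (2*β - 1/2)| = 0 ∧
    (1 - (m:ℝ)/n)/β = 2 - 1/(2*β) := by
  have hN : (0:ℝ) < (n:ℝ) := by exact_mod_cast hn
  have hcard : (univ.filter (fun i => ¬ 1/2 < a i)).card = n - m := by
    have := Finset.card_filter_add_card_filter_not
      (s := (univ : Finset (Fin n))) (p := fun i => 1/2 < a i)
    simp only [Finset.card_univ, Fintype.card_fin] at this
    omega
  have hmn : m ≤ n := by
    rw [hm]
    calc (univ.filter (fun i => 1/2 < a i)).card ≤ (univ : Finset (Fin n)).card :=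
      Finset.card_filter_le _ _
    _ = n := by simp
  have hsum : ∑ i, a i = m * (δ + (1-δ)/2) + ((n:ℝ) - m) * ((1-δ)/2) := by
    rw [← Finset.sum_filter_add_sum_filter_not univ (fun i => 1/2 < a i) a]
    have h1 : ∀ i ∈ univ.filter (fun i => 1/2 < a i), a i = δ + (1-δ)/2 := by
      intro i hi
      simp only [Finset.mem_filter] at hi
      rcases hmarg i with h | h
      · linarith
      · linarith [hi.2]
    have h2 : ∀ i ∈ univ.filter (fun i => ¬ 1/2 < a i), a i = (1-δ)/2 := by
      intro i hi
      simp only [Finset.mem_filter, not_lt] at hi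
      rcases hmarg i with h | h
      · linarith [hi.2]
      · linarith
    rw [Finset.sum_congr rfl h1, Finset.sum_congr rfl h2, Finset.sum_const,
      Finset.sum_const, hcard, ← hm]
    have : ((n - m : ℕ) : ℝ) = (n:ℝ) - m := by
      have := Nat.cast_sub hmn (R := ℝ); linarith
    simp [nsmul_eq_mul, this]
    ring
  -- key equation
  set t : ℝ := (m:ℝ)/n with ht
  have hβeq : β = (1+δ)/2 - t * δ := by
    rw [hβ, hα, hsum, ht]
    field_simp
    ring
  -- from hβ2 : β < 1/2 deduce t > 1/2 (using δ > 0)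
  have hlt : 1/2 < t := by nlinarith [hβeq, hβ2, hδ]
  have h2 : (1 - 2*t) * (1 - 2*δ) = 0 := by linear_combination 2*hgap + 4*hβeq
  have hδ12 : δ = 1/2 := by
    rcases mul_eq_zero.mp h2 with h | h
    · linarith
    · linarith
  have hβne : β ≠ 0 := by linarith
  refine ⟨hδ12, by rw [hgap]; simp, ?_⟩
  rw [hgap]
  field_simp
end

section
/- Let n, m, k be integers with n/2 < m < n and 0 ≤ k ≤ n − m, let δ' ∈ (0, 1] and ε ∈ (0, 1/2). Consider the equal-population districting plan in which k districts have β_i = 1/2 + ε, k districts have β_i = 1/2 − ε, n − m − k districts have β_i = 1/2 + δ'/2, and m − k districts have β_i = 1/2 − δ'/2. Then: (a) the overall minority fraction β = (1/n)·∑_{i=1}^n β_i equals 1/2 − (m/n − 1/2)·δ' and satisfies 0 < β < 1/2; (b) exactly n − m districts are majority-B; and (c) with Δ = 1 − 2β, the proportionality ratio ρ = (1 − m/n)/β equals (1 − Δ/δ')/(1 − Δ). In particular, for any k ≤ n − m there is a plan with 2k districts of arbitrarily small margin 2ε whose proportionality ratio depends only on the margin δ' of the remaining n − 2k districts. -/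
open Finset

/-- Given `n/2 < m < n`, `0 ≤ k ≤ n − m`, `δ' ∈ (0,1]` and
`ε ∈ (0,1/2)`, the equal-population plan with `k` districts at `β_i = 1/2 + ε`,
`k` at `β_i = 1/2 − ε`, `n − m − k` at `β_i = 1/2 + δ'/2` and `m − k` at
`β_i = 1/2 − δ'/2` satisfies: (a) `β = 1/2 − (m/n − 1/2)δ' ∈ (0, 1/2)`;
(b) exactly `n − m` districts are majority-B; (c) with `Δ = 1 − 2β`, the
proportionality ratio `ρ = (1 − m/n)/β` equals `(1 − Δ/δ')/(1 − Δ)`. -/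
theorem competitive_districts_preserve_proportionality
    (n m k : ℕ) (hnm : (n:ℝ)/2 < (m:ℝ)) (hmn : m < n) (hk : k ≤ n - m)
    (δ' ε : ℝ) (hδ0 : 0 < δ') (hδ1 : δ' ≤ 1) (hε0 : 0 < ε) (hε2 : ε < 1/2)
    (b : Fin n → ℝ)
    (hb : ∀ i : Fin n, b i =
      if (i : ℕ) < k then 1/2 + ε
      else if (i : ℕ) < 2*k then 1/2 - ε
      else if (i : ℕ) < k + (n - m) then 1/2 + δ'/2
      else 1/2 - δ'/2)
    (β Δ ρ : ℝ)
    (hβ : β = (∑ i, b i) / n)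
    (hΔ : Δ = 1 - 2*β)
    (hρ : ρ = (1 - (m:ℝ)/n)/β) :
    (β = 1/2 - ((m:ℝ)/n - 1/2) * δ' ∧ 0 < β ∧ β < 1/2) ∧
    (univ.filter (fun i => 1/2 < b i)).card = n - m ∧
    ρ = (1 - Δ/δ')/(1 - Δ) := by
  have hn2m : n < 2*m := by
    have : (n:ℝ) < 2*m := by linarith
    exact_mod_cast this
  have h1 : k ≤ 2*k := by omega
  have h2 : 2*k ≤ k + (n-m) := by omega
  have h3 : k + (n-m) ≤ n := by omega
  have hn0 : 0 < n := by omega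
  have hnR : (0:ℝ) < n := by exact_mod_cast hn0
  set F : ℕ → ℝ := fun j =>
      if j < k then 1/2 + ε
      else if j < 2*k then 1/2 - ε
      else if j < k + (n - m) then 1/2 + δ'/2
      else 1/2 - δ'/2 with hF
  -- pointwise values on the four blocks
  have hv1 : ∀ j ∈ Ico 0 k, F j = 1/2 + ε := by
    intro j hj
    simp only [Finset.mem_Ico] at hj
    simp [hF, hj.2]
  have hv2 : ∀ j ∈ Ico k (2*k), F j = 1/2 - ε := by
    intro j hj
    simp only [Finset.mem_Ico] at hj
    have h4 : ¬ j < k := by omega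
    simp [hF, h4, hj.2]
  have hv3 : ∀ j ∈ Ico (2*k) (k + (n-m)), F j = 1/2 + δ'/2 := by
    intro j hj
    simp only [Finset.mem_Ico] at hj
    have h4 : ¬ j < k := by omega
    have h5 : ¬ j < 2*k := by omega
    simp [hF, h4, h5, hj.2]
  have hv4 : ∀ j ∈ Ico (k + (n-m)) n, F j = 1/2 - δ'/2 := by
    intro j hj
    simp only [Finset.mem_Ico] at hj
    have h4 : ¬ j < k := by omega
    have h5 : ¬ j < 2*k := by omega
    have h6 : ¬ j < k + (n-m) := by omega
    simp [hF, h4, h5, h6]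
  have hc1 : 2*k - k = k := by omega
  have hc2 : k + (n-m) - 2*k = n - m - k := by omega
  have hc3 : n - (k + (n-m)) = m - k := by omega
  have hsum : ∑ i, b i = (n:ℝ)/2 + ((n:ℝ) - 2*m) * δ'/2 := by
    have hbF : ∑ i, b i = ∑ j ∈ range n, F j := by
      rw [show (∑ i, b i) = ∑ i : Fin n, F i.val from
        Finset.sum_congr rfl (fun i _ => hb i)]
      exact Fin.sum_univ_eq_sum_range (fun j => F j) n
    rw [hbF, Finset.range_eq_Ico,
      ← Finset.sum_Ico_consecutive F (Nat.zero_le k) (le_trans h1 (le_trans h2 h3)),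
      ← Finset.sum_Ico_consecutive F h1 (le_trans h2 h3),
      ← Finset.sum_Ico_consecutive F h2 h3,
      Finset.sum_congr rfl hv1, Finset.sum_congr rfl hv2,
      Finset.sum_congr rfl hv3, Finset.sum_congr rfl hv4,
      Finset.sum_const, Finset.sum_const, Finset.sum_const, Finset.sum_const,
      Nat.card_Ico, Nat.card_Ico, Nat.card_Ico, Nat.card_Ico,
      hc1, hc2, hc3, Nat.sub_zero]
    have d1 : ((n - m - k : ℕ):ℝ) = (n:ℝ) - m - k := by
      rw [Nat.sub_sub, Nat.cast_sub (by omega), Nat.cast_add]; ring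
    have d2 : ((m - k : ℕ):ℝ) = (m:ℝ) - k := by
      rw [Nat.cast_sub (by omega)]
    simp only [nsmul_eq_mul]
    rw [d1, d2]
    ring
  have hβval : β = 1/2 - ((m:ℝ)/n - 1/2) * δ' := by
    rw [hβ, hsum]; field_simp; ring
  have hmnR : (m:ℝ) < n := by exact_mod_cast hmn
  have hfrac1 : (0:ℝ) < (m:ℝ)/n - 1/2 := by
    have : (n:ℝ) < 2*m := by linarith
    rw [sub_pos, div_lt_div_iff₀ (by norm_num) hnR]
    linarith
  have hfrac2 : (m:ℝ)/n < 1 := by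
    rw [div_lt_one hnR]; exact hmnR
  have hβpos : 0 < β := by
    rw [hβval]
    have h5 : ((m:ℝ)/n - 1/2) * δ' < 1/2 := by nlinarith
    linarith
  have hβlt : β < 1/2 := by
    rw [hβval]
    have : 0 < ((m:ℝ)/n - 1/2) * δ' := mul_pos hfrac1 hδ0
    linarith
  refine ⟨⟨hβval, hβpos, hβlt⟩, ?_, ?_⟩
  · -- cardinality
    set G : ℕ → ℕ := fun j => if 1/2 < F j then 1 else 0 with hG
    have hw1 : ∀ j ∈ Ico 0 k, G j = 1 := fun j hj => by
      simp only [hG, hv1 j hj]; rw [if_pos (by linarith)]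
    have hw2 : ∀ j ∈ Ico k (2*k), G j = 0 := fun j hj => by
      simp only [hG, hv2 j hj]; rw [if_neg (by linarith)]
    have hw3 : ∀ j ∈ Ico (2*k) (k + (n-m)), G j = 1 := fun j hj => by
      simp only [hG, hv3 j hj]; rw [if_pos (by linarith)]
    have hw4 : ∀ j ∈ Ico (k + (n-m)) n, G j = 0 := fun j hj => by
      simp only [hG, hv4 j hj]; rw [if_neg (by linarith)]
    have hcard : (univ.filter (fun i => 1/2 < b i)).card = ∑ j ∈ range n, G j := by
      rw [Finset.card_filter]
      rw [show (∑ i : Fin n, if 1/2 < b i then 1 else 0) = ∑ i : Fin n, G i.val from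
        Finset.sum_congr rfl (fun i _ => by rw [hG]; simp only [hb i, hF])]
      exact Fin.sum_univ_eq_sum_range _ n
    rw [hcard, Finset.range_eq_Ico,
      ← Finset.sum_Ico_consecutive G (Nat.zero_le k) (le_trans h1 (le_trans h2 h3)),
      ← Finset.sum_Ico_consecutive G h1 (le_trans h2 h3),
      ← Finset.sum_Ico_consecutive G h2 h3,
      Finset.sum_congr rfl hw1, Finset.sum_congr rfl hw2,
      Finset.sum_congr rfl hw3, Finset.sum_congr rfl hw4,
      Finset.sum_const, Finset.sum_const, Finset.sum_const, Finset.sum_const,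
      Nat.card_Ico, Nat.card_Ico, Nat.card_Ico, Nat.card_Ico]
    simp only [smul_eq_mul]
    omega
  · -- ratio
    have hΔval : Δ = (2*(m:ℝ)/n - 1) * δ' := by
      rw [hΔ, hβval]; ring
    have hb2 : 1 - Δ = 2 * β := by rw [hΔ]; ring
    rw [hρ, hb2, hΔval, mul_div_assoc, div_self (ne_of_gt hδ0), mul_one]
    have h7 : (1 : ℝ) - (2*(m:ℝ)/n - 1) = 2 * (1 - (m:ℝ)/n) := by ring
    rw [h7, mul_div_mul_left _ _ (two_ne_zero)]
end
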